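/- Let a ∈ ℂ with a² + a + 2 = 0 and consider the arrangement K' of the 12 lines ℓ₃, ℓ₄, ℓ₆, ℓ₇, ℓ₈, ℓ₉, ℓ₁₀, ℓ₁₁, ℓ₁₃, ℓ₁₄, ℓ₁₆, ℓ₁₇ from the Klein arrangement. Every pair of distinct lines in K' meets in a point (no two are parallel in ℙ², trivially), no point lies on more than 3 of these lines, there are exactly 12 points lying on exactly 3 lines, and exactly 30 points lying on exactly 2 lines. -/
import Mathlib

set_option maxRecDepth 100000

/-- Coefficient vectors of the 12 lines ℓ₃,ℓ₄,ℓ₆,ℓ₇,ℓ₈,ℓ₉,ℓ₁₀,ℓ₁₁,ℓ₁₃,ℓ₁₄,ℓ₁₆,ℓ₁₇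
of the Klein subarrangement, where `a² + a + 2 = 0`. -/
def kleinSubLines (a : ℂ) : Fin 12 → Fin 3 → ℂ :=
  ![![a, 1, -1], ![a, -1, 1], ![1, a, -1], ![a, -1, -1], ![-1, 1, a],
    ![a, 1, 1], ![-1, a, 1], ![-1, -1, a], ![-1, a, -1], ![1, a, 1],
    ![1, -1, a], ![1, 1, a]]

/-- A point of `ℙ²(ℂ)` lies on the line with coefficient vector `v` iff the
corresponding linear form vanishes at (a representative of) the point. -/
noncomputable def onLine (v : Fin 3 → ℂ) (p : Projectivization ℂ (Fin 3 → ℂ)) : Prop :=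
  v 0 * p.rep 0 + v 1 * p.rep 1 + v 2 * p.rep 2 = 0

/-! ### Integer model of `ℤ[a]`, `a² = -a - 2` -/

/-- Elements of `ℤ[a]` as pairs `(c, d) ↦ c + d·a`. -/
abbrev Zq := ℤ × ℤ

def zmul (x y : Zq) : Zq := (x.1*y.1 - 2*x.2*y.2, x.1*y.2 + x.2*y.1 - x.2*y.2)
def zadd (x y : Zq) : Zq := (x.1+y.1, x.2+y.2)
def zsub (x y : Zq) : Zq := (x.1-y.1, x.2-y.2)

/-- The integer model of the twelve lines. -/
def LA : Fin 12 → Fin 3 → Zq :=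
  ![![(0,1),(1,0),(-1,0)], ![(0,1),(-1,0),(1,0)], ![(1,0),(0,1),(-1,0)],
    ![(0,1),(-1,0),(-1,0)], ![(-1,0),(1,0),(0,1)], ![(0,1),(1,0),(1,0)],
    ![(-1,0),(0,1),(1,0)], ![(-1,0),(-1,0),(0,1)], ![(-1,0),(0,1),(-1,0)],
    ![(1,0),(0,1),(1,0)], ![(1,0),(-1,0),(0,1)], ![(1,0),(1,0),(0,1)]]

def lfA (u v : Fin 3 → Zq) : Zq :=
  zadd (zadd (zmul (u 0) (v 0)) (zmul (u 1) (v 1))) (zmul (u 2) (v 2))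
def cpA (u v : Fin 3 → Zq) : Fin 3 → Zq :=
  ![zsub (zmul (u 1) (v 2)) (zmul (u 2) (v 1)),
    zsub (zmul (u 2) (v 0)) (zmul (u 0) (v 2)),
    zsub (zmul (u 0) (v 1)) (zmul (u 1) (v 0))]

/-- The indices of the lines through the intersection point of lines `i` and `j`. -/
def thru (i j : Fin 12) : Finset (Fin 12) :=
  Finset.univ.filter (fun k => lfA (LA k) (cpA (LA i) (LA j)) = 0)

/-- Representative pairs for the 12 triple points. -/
def R3 : Finset (Fin 12 × Fin 12) :=
  {(0,2),(0,6),(0,8),(1,2),(1,4),(1,9),(2,3),(3,6),(3,9),(4,5),(5,7),(5,8)}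
/-- Representative pairs for the 30 double points. -/
def R2 : Finset (Fin 12 × Fin 12) :=
  {(0,1),(0,3),(0,4),(0,5),(0,9),(1,3),(1,5),(1,6),(1,11),(2,5),(2,6),(2,8),
   (2,9),(2,10),(3,5),(3,7),(3,8),(4,7),(4,9),(4,10),(4,11),(5,10),(6,8),
   (6,9),(6,11),(7,8),(7,10),(7,11),(8,9),(10,11)}

theorem D1 : ∀ i j : Fin 12, i ≠ j → cpA (LA i) (LA j) ≠ 0 := by decide
theorem D2 : ∀ i j : Fin 12, i ≠ j → (thru i j).card ≤ 3 := by decide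
theorem D3 : ∀ q ∈ R3, q.1 ≠ q.2 ∧ (thru q.1 q.2).card = 3 := by decide
theorem D3' : ∀ q ∈ R2, q.1 ≠ q.2 ∧ (thru q.1 q.2).card = 2 := by decide
theorem D4 : ∀ q ∈ R3, ∀ q' ∈ R3, q ≠ q' →
    cpA (cpA (LA q.1) (LA q.2)) (cpA (LA q'.1) (LA q'.2)) ≠ 0 := by decide
theorem D4' : ∀ q ∈ R2, ∀ q' ∈ R2, q ≠ q' →
    cpA (cpA (LA q.1) (LA q.2)) (cpA (LA q'.1) (LA q'.2)) ≠ 0 := by decide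
theorem D5 : ∀ i j : Fin 12, i ≠ j → (thru i j).card = 3 →
    ∃ q ∈ R3, cpA (cpA (LA i) (LA j)) (cpA (LA q.1) (LA q.2)) = 0 := by decide
theorem D5' : ∀ i j : Fin 12, i ≠ j → (thru i j).card = 2 →
    ∃ q ∈ R2, cpA (cpA (LA i) (LA j)) (cpA (LA q.1) (LA q.2)) = 0 := by decide
theorem Dcard3 : R3.card = 12 := by decide
theorem Dcard2 : R2.card = 30 := by decide

/-! ### The evaluation map `ℤ[a] → ℂ` -/

noncomputable def φ (a : ℂ) (x : Zq) : ℂ := (x.1 : ℂ) + (x.2 : ℂ) * a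

section
variable {a : ℂ}

lemma aim (ha : a ^ 2 + a + 2 = 0) : a.im ≠ 0 := by
  intro h0
  have h := congrArg Complex.re ha
  simp [pow_two, Complex.mul_re, Complex.add_re, h0] at h
  nlinarith [sq_nonneg (2*a.re+1)]

lemma φ_inj (ha : a ^ 2 + a + 2 = 0) {x : Zq} (h : φ a x = 0) : x = 0 := by
  have him := congrArg Complex.im h
  simp [φ, Complex.add_im, Complex.mul_im] at him
  rcases him with h2 | h2
  · have hre := congrArg Complex.re h
    simp [φ, Complex.add_re, Complex.mul_re, h2] at hre
    ext <;> simp [hre, h2]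
  · exact absurd h2 (aim ha)

lemma φ_zero : φ a 0 = 0 := by simp [φ]

lemma φ_add (x y : Zq) : φ a (zadd x y) = φ a x + φ a y := by
  simp [φ, zadd]; ring

lemma φ_sub (x y : Zq) : φ a (zsub x y) = φ a x - φ a y := by
  simp [φ, zsub]; ring

lemma φ_mul (ha : a ^ 2 + a + 2 = 0) (x y : Zq) : φ a (zmul x y) = φ a x * φ a y := by
  simp only [φ, zmul]; push_cast
  linear_combination (-(x.2 : ℂ) * y.2) * ha

end

/-! ### Generic plane projective geometry over ℂ -/

open Projectivization

def lfC (v w : Fin 3 → ℂ) : ℂ := v 0 * w 0 + v 1 * w 1 + v 2 * w 2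
def cpC (v w : Fin 3 → ℂ) : Fin 3 → ℂ :=
  ![v 1 * w 2 - v 2 * w 1, v 2 * w 0 - v 0 * w 2, v 0 * w 1 - v 1 * w 0]

lemma onLine_def (v : Fin 3 → ℂ) (p) : onLine v p ↔ lfC v p.rep = 0 := Iff.rfl

lemma onLine_mk (v w : Fin 3 → ℂ) (hw : w ≠ 0) :
    onLine v (Projectivization.mk ℂ w hw) ↔ lfC v w = 0 := by
  obtain ⟨c, hc⟩ := exists_smul_eq_mk_rep ℂ w hw
  rw [onLine_def]
  have h : lfC v ((Projectivization.mk ℂ w hw).rep) = c * lfC v w := by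
    rw [← hc]
    simp only [lfC, Pi.smul_apply, Units.smul_def, smul_eq_mul]
    ring
  rw [h]
  constructor
  · intro h0
    rcases mul_eq_zero.1 h0 with h1 | h1
    · exact absurd h1 c.ne_zero
    · exact h1
  · intro h0; rw [h0, mul_zero]

lemma lfC_cp_left (v w : Fin 3 → ℂ) : lfC v (cpC v w) = 0 := by
  simp [lfC, cpC]; ring

lemma lfC_cp_right (v w : Fin 3 → ℂ) : lfC w (cpC v w) = 0 := by
  simp [lfC, cpC]; ring

private lemma ratio {u0 u1 u2 z0 z1 z2 : ℂ} (hk : u0 ≠ 0)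
    (e1 : z1 * u0 = z0 * u1) (e2 : z2 * u0 = z0 * u2) :
    z0 = z0 / u0 * u0 ∧ z1 = z0 / u0 * u1 ∧ z2 = z0 / u0 * u2 := by
  refine ⟨by field_simp, ?_, ?_⟩
  · field_simp
    linear_combination e1
  · field_simp
    linear_combination e2

/-- If the cross product vanishes, the vectors are proportional. -/
lemma smul_of_cp_eq_zero {u z : Fin 3 → ℂ} (hu : u ≠ 0) (hz : z ≠ 0)
    (h : cpC u z = 0) : ∃ c : ℂ, c ≠ 0 ∧ z = c • u := by
  have h0 := congrFun h 0
  have h1 := congrFun h 1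
  have h2 := congrFun h 2
  simp only [cpC] at h0 h1 h2
  rw [show (![u 1 * z 2 - u 2 * z 1, u 2 * z 0 - u 0 * z 2, u 0 * z 1 - u 1 * z 0] : Fin 3 → ℂ) 0
      = u 1 * z 2 - u 2 * z 1 from rfl] at h0
  rw [show (![u 1 * z 2 - u 2 * z 1, u 2 * z 0 - u 0 * z 2, u 0 * z 1 - u 1 * z 0] : Fin 3 → ℂ) 1
      = u 2 * z 0 - u 0 * z 2 from rfl] at h1
  rw [show (![u 1 * z 2 - u 2 * z 1, u 2 * z 0 - u 0 * z 2, u 0 * z 1 - u 1 * z 0] : Fin 3 → ℂ) 2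
      = u 0 * z 1 - u 1 * z 0 from rfl] at h2
  simp only [Pi.zero_apply, sub_eq_zero] at h0 h1 h2
  have hcase : u 0 ≠ 0 ∨ u 1 ≠ 0 ∨ u 2 ≠ 0 := by
    by_contra hcon
    push_neg at hcon
    apply hu
    funext m
    fin_cases m
    · exact hcon.1
    · exact hcon.2.1
    · exact hcon.2.2
  have zero_of : ∀ c : ℂ, z 0 = c * u 0 → z 1 = c * u 1 → z 2 = c * u 2 → c = 0 → False := by
    intro c q0 q1 q2 hc
    apply hz
    funext m
    fin_cases m
    · show z 0 = 0; rw [q0, hc, zero_mul]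
    · show z 1 = 0; rw [q1, hc, zero_mul]
    · show z 2 = 0; rw [q2, hc, zero_mul]
  have build : ∀ c : ℂ, z 0 = c * u 0 → z 1 = c * u 1 → z 2 = c * u 2 → z = c • u := by
    intro c q0 q1 q2
    funext m
    fin_cases m
    · show z 0 = c * u 0; exact q0
    · show z 1 = c * u 1; exact q1
    · show z 2 = c * u 2; exact q2
  rcases hcase with hk | hk | hk
  · have e1 : z 1 * u 0 = z 0 * u 1 := by linear_combination h2
    have e2 : z 2 * u 0 = z 0 * u 2 := by linear_combination -h1
    obtain ⟨q0, q1, q2⟩ := ratio hk e1 e2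
    exact ⟨z 0 / u 0, fun hc => zero_of _ q0 q1 q2 hc, build _ q0 q1 q2⟩
  · have e1 : z 0 * u 1 = z 1 * u 0 := by linear_combination -h2
    have e2 : z 2 * u 1 = z 1 * u 2 := by linear_combination h0
    obtain ⟨q1, q0, q2⟩ := ratio hk e1 e2
    exact ⟨z 1 / u 1, fun hc => zero_of _ q0 q1 q2 hc, build _ q0 q1 q2⟩
  · have e1 : z 0 * u 2 = z 2 * u 0 := by linear_combination h1
    have e2 : z 1 * u 2 = z 2 * u 1 := by linear_combination -h0
    obtain ⟨q2, q0, q1⟩ := ratio hk e1 e2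
    exact ⟨z 2 / u 2, fun hc => zero_of _ q0 q1 q2 hc, build _ q0 q1 q2⟩

lemma mk_eq_of_cp_eq_zero {u z : Fin 3 → ℂ} (hu : u ≠ 0) (hz : z ≠ 0)
    (h : cpC u z = 0) : Projectivization.mk ℂ u hu = Projectivization.mk ℂ z hz := by
  obtain ⟨c, hc, hzc⟩ := smul_of_cp_eq_zero hu hz h
  symm
  rw [mk_eq_mk_iff]
  refine ⟨Units.mk0 c hc, ?_⟩
  rw [Units.smul_def]
  exact hzc.symm

lemma cp_eq_zero_of_mk_eq {u z : Fin 3 → ℂ} (hu : u ≠ 0) (hz : z ≠ 0)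
    (h : Projectivization.mk ℂ u hu = Projectivization.mk ℂ z hz) : cpC u z = 0 := by
  rw [mk_eq_mk_iff] at h
  obtain ⟨c, hc⟩ := h
  rw [← hc]
  funext m
  fin_cases m
  · show (c : ℂ) * z 1 * z 2 - (c : ℂ) * z 2 * z 1 = 0; ring
  · show (c : ℂ) * z 2 * z 0 - (c : ℂ) * z 0 * z 2 = 0; ring
  · show (c : ℂ) * z 0 * z 1 - (c : ℂ) * z 1 * z 0 = 0; ring

/-- A point on two independent lines is their cross product. -/
lemma two_lines {v w x : Fin 3 → ℂ} (hx : x ≠ 0) (hcp : cpC v w ≠ 0)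
    (h1 : lfC v x = 0) (h2 : lfC w x = 0) :
    Projectivization.mk ℂ x hx = Projectivization.mk ℂ (cpC v w) hcp := by
  apply mk_eq_of_cp_eq_zero
  simp only [lfC] at h1 h2
  funext m
  fin_cases m
  · show x 1 * (v 0 * w 1 - v 1 * w 0) - x 2 * (v 2 * w 0 - v 0 * w 2) = 0
    linear_combination v 0 * h2 - w 0 * h1
  · show x 2 * (v 1 * w 2 - v 2 * w 1) - x 0 * (v 0 * w 1 - v 1 * w 0) = 0
    linear_combination v 1 * h2 - w 1 * h1
  · show x 0 * (v 2 * w 0 - v 0 * w 2) - x 1 * (v 1 * w 2 - v 2 * w 1) = 0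
    linear_combination v 2 * h2 - w 2 * h1

/-! ### Transfer between the integer model and ℂ -/

/-- Evaluation of an integer vector in ℂ. -/
noncomputable def pv (a : ℂ) (u : Fin 3 → Zq) : Fin 3 → ℂ := fun k => φ a (u k)

/-- The complex lines, via the integer model. -/
noncomputable def LAc (a : ℂ) (i : Fin 12) : Fin 3 → ℂ := pv a (LA i)

section
variable {a : ℂ} (ha : a ^ 2 + a + 2 = 0)

lemma pv_ne (ha : a ^ 2 + a + 2 = 0) {u : Fin 3 → Zq} (hu : u ≠ 0) : pv a u ≠ 0 := by
  intro hc
  apply hu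
  funext k
  exact φ_inj ha (congrFun hc k)

lemma pv_eq_zero_iff (ha : a ^ 2 + a + 2 = 0) {u : Fin 3 → Zq} : pv a u = 0 ↔ u = 0 := by
  constructor
  · intro hc
    funext k
    exact φ_inj ha (congrFun hc k)
  · rintro rfl
    funext k
    simp [pv, φ_zero]

lemma lf_compat (ha : a ^ 2 + a + 2 = 0) (u v : Fin 3 → Zq) : lfC (pv a u) (pv a v) = φ a (lfA u v) := by
  simp [lfC, lfA, pv, φ_mul ha, φ_add]

lemma cp_compat (ha : a ^ 2 + a + 2 = 0) (u v : Fin 3 → Zq) : cpC (pv a u) (pv a v) = pv a (cpA u v) := by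
  funext m
  fin_cases m
  · show φ a (u 1) * φ a (v 2) - φ a (u 2) * φ a (v 1) = φ a (zsub (zmul (u 1) (v 2)) (zmul (u 2) (v 1)))
    rw [φ_sub, φ_mul ha, φ_mul ha]
  · show φ a (u 2) * φ a (v 0) - φ a (u 0) * φ a (v 2) = φ a (zsub (zmul (u 2) (v 0)) (zmul (u 0) (v 2)))
    rw [φ_sub, φ_mul ha, φ_mul ha]
  · show φ a (u 0) * φ a (v 1) - φ a (u 1) * φ a (v 0) = φ a (zsub (zmul (u 0) (v 1)) (zmul (u 1) (v 0)))
    rw [φ_sub, φ_mul ha, φ_mul ha]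

lemma klein_eq : kleinSubLines a = LAc a := by
  funext i k
  fin_cases i <;> fin_cases k <;> norm_num [kleinSubLines, LAc, pv, LA, φ]

lemma cp_ne (ha : a ^ 2 + a + 2 = 0) {i j : Fin 12} (hij : i ≠ j) : cpC (LAc a i) (LAc a j) ≠ 0 := by
  rw [show LAc a i = pv a (LA i) from rfl, show LAc a j = pv a (LA j) from rfl,
    cp_compat ha]
  exact pv_ne ha (D1 i j hij)

end

/-- The intersection point of two of the lines (junk if the pair is degenerate). -/
noncomputable def Pt (a : ℂ) (q : Fin 12 × Fin 12) : Projectivization ℂ (Fin 3 → ℂ) :=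
  if h : cpC (LAc a q.1) (LAc a q.2) ≠ 0 then Projectivization.mk ℂ _ h
  else Projectivization.mk ℂ ![1,0,0]
    (by intro hc; have h0 := congrFun hc 0; simp at h0)

section
variable {a : ℂ} (ha : a ^ 2 + a + 2 = 0)

lemma Pt_eq (ha : a ^ 2 + a + 2 = 0) (q : Fin 12 × Fin 12) (hq : q.1 ≠ q.2) :
    Pt a q = Projectivization.mk ℂ (cpC (LAc a q.1) (LAc a q.2)) (cp_ne ha hq) :=
  dif_pos (cp_ne ha hq)

lemma onPt (ha : a ^ 2 + a + 2 = 0) (k : Fin 12) (q : Fin 12 × Fin 12) (hq : q.1 ≠ q.2) :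
    onLine (LAc a k) (Pt a q) ↔ lfA (LA k) (cpA (LA q.1) (LA q.2)) = 0 := by
  rw [Pt_eq ha q hq, onLine_mk,
    show LAc a q.1 = pv a (LA q.1) from rfl, show LAc a q.2 = pv a (LA q.2) from rfl,
    cp_compat ha, show LAc a k = pv a (LA k) from rfl, lf_compat ha]
  exact ⟨fun h => φ_inj ha h, fun h => by rw [h, φ_zero]⟩

lemma lineSet (ha : a ^ 2 + a + 2 = 0) (q : Fin 12 × Fin 12) (hq : q.1 ≠ q.2) :
    {k : Fin 12 | onLine (LAc a k) (Pt a q)} = ↑(thru q.1 q.2) := by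
  ext k
  simp only [Set.mem_setOf_eq, Finset.coe_filter, thru, Finset.mem_filter,
    Finset.mem_univ, true_and, Set.mem_setOf_eq]
  exact onPt ha k q hq

lemma locate (ha : a ^ 2 + a + 2 = 0) (p : Projectivization ℂ (Fin 3 → ℂ)) (i j : Fin 12) (hij : i ≠ j)
    (hi : onLine (LAc a i) p) (hj : onLine (LAc a j) p) : p = Pt a (i, j) := by
  rw [Pt_eq ha (i, j) hij, ← p.mk_rep]
  exact two_lines p.rep_nonzero (cp_ne ha hij) ((onLine_def _ _).1 hi) ((onLine_def _ _).1 hj)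

/-- Identification of intersection points from the integer model. -/
lemma Pt_eq_Pt (ha : a ^ 2 + a + 2 = 0) {i j : Fin 12} (hij : i ≠ j) (q : Fin 12 × Fin 12) (hq : q.1 ≠ q.2)
    (h : cpA (cpA (LA i) (LA j)) (cpA (LA q.1) (LA q.2)) = 0) :
    Pt a (i, j) = Pt a q := by
  rw [Pt_eq ha (i, j) hij, Pt_eq ha q hq]
  apply mk_eq_of_cp_eq_zero
  rw [show LAc a i = pv a (LA i) from rfl, show LAc a j = pv a (LA j) from rfl,
    show LAc a q.1 = pv a (LA q.1) from rfl, show LAc a q.2 = pv a (LA q.2) from rfl,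
    cp_compat ha, cp_compat ha, cp_compat ha]
  rw [pv_eq_zero_iff ha]
  exact h

lemma Pt_ne_Pt (ha : a ^ 2 + a + 2 = 0) (q q' : Fin 12 × Fin 12) (hq : q.1 ≠ q.2) (hq' : q'.1 ≠ q'.2)
    (h : cpA (cpA (LA q.1) (LA q.2)) (cpA (LA q'.1) (LA q'.2)) ≠ 0) :
    Pt a q ≠ Pt a q' := by
  rw [Pt_eq ha q hq, Pt_eq ha q' hq']
  intro hc
  apply h
  have h0 := cp_eq_zero_of_mk_eq (cp_ne ha hq) (cp_ne ha hq') hc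
  rw [show LAc a q.1 = pv a (LA q.1) from rfl, show LAc a q.2 = pv a (LA q.2) from rfl,
    show LAc a q'.1 = pv a (LA q'.1) from rfl, show LAc a q'.2 = pv a (LA q'.2) from rfl,
    cp_compat ha, cp_compat ha, cp_compat ha, pv_eq_zero_iff ha] at h0
  exact h0

/-- The set of points of a given multiplicity `n ∈ {2,3}`, described via representatives. -/
lemma mult_set (ha : a ^ 2 + a + 2 = 0) (R : Finset (Fin 12 × Fin 12)) (n : ℕ) (hn : 1 < n)
    (hR : ∀ q ∈ R, q.1 ≠ q.2 ∧ (thru q.1 q.2).card = n)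
    (hcover : ∀ i j : Fin 12, i ≠ j → (thru i j).card = n →
      ∃ q ∈ R, cpA (cpA (LA i) (LA j)) (cpA (LA q.1) (LA q.2)) = 0) :
    {p : Projectivization ℂ (Fin 3 → ℂ) |
        {i : Fin 12 | onLine (LAc a i) p}.ncard = n} = Pt a '' ↑R := by
  ext p
  simp only [Set.mem_setOf_eq, Set.mem_image, Finset.mem_coe]
  constructor
  · intro hp
    have h2 : 1 < {i : Fin 12 | onLine (LAc a i) p}.ncard := by rw [hp]; exact hn
    obtain ⟨i, j, hi, hj, hij⟩ := (Set.one_lt_ncard_iff (Set.toFinite _)).1 h2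
    have hp' := locate ha p i j hij hi hj
    rw [hp', lineSet ha (i, j) hij, Set.ncard_coe_finset] at hp
    obtain ⟨q, hqR, hq0⟩ := hcover i j hij hp
    exact ⟨q, hqR, ((hp'.trans (Pt_eq_Pt ha hij q (hR q hqR).1 hq0))).symm⟩
  · rintro ⟨q, hqR, rfl⟩
    rw [lineSet ha q (hR q hqR).1, Set.ncard_coe_finset]
    exact (hR q hqR).2

lemma mult_count (ha : a ^ 2 + a + 2 = 0) (R : Finset (Fin 12 × Fin 12))
    (hR : ∀ q ∈ R, q.1 ≠ q.2)
    (hinj : ∀ q ∈ R, ∀ q' ∈ R, q ≠ q' →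
      cpA (cpA (LA q.1) (LA q.2)) (cpA (LA q'.1) (LA q'.2)) ≠ 0) :
    (Pt a '' ↑R).ncard = R.card := by
  rw [Set.ncard_image_of_injOn, Set.ncard_coe_finset]
  intro q hq q' hq' heq
  by_contra hne
  exact Pt_ne_Pt ha q q' (hR q hq) (hR q' hq')
    (hinj q hq q' hq' hne) heq

end

/-- The 12 lines of `K'` pairwise intersect, no point lies on more than 3 of
them, there are exactly 12 triple points and exactly 30 double points. -/
theorem klein_sub_arrangement_singularities (a : ℂ) (ha : a ^ 2 + a + 2 = 0) :
    (∀ i j : Fin 12, i ≠ j →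
        ∃ p : Projectivization ℂ (Fin 3 → ℂ),
          onLine (kleinSubLines a i) p ∧ onLine (kleinSubLines a j) p) ∧
    (∀ p : Projectivization ℂ (Fin 3 → ℂ),
        {i : Fin 12 | onLine (kleinSubLines a i) p}.ncard ≤ 3) ∧
    {p : Projectivization ℂ (Fin 3 → ℂ) |
        {i : Fin 12 | onLine (kleinSubLines a i) p}.ncard = 3}.ncard = 12 ∧
    {p : Projectivization ℂ (Fin 3 → ℂ) |
        {i : Fin 12 | onLine (kleinSubLines a i) p}.ncard = 2}.ncard = 30 := by
  rw [show kleinSubLines a = LAc a from klein_eq]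
  refine ⟨?_, ?_, ?_, ?_⟩
  · -- pairwise intersections
    intro i j hij
    refine ⟨Pt a (i, j), ?_, ?_⟩
    · rw [Pt_eq ha (i, j) hij, onLine_mk]
      exact lfC_cp_left _ _
    · rw [Pt_eq ha (i, j) hij, onLine_mk]
      exact lfC_cp_right _ _
  · -- at most triple points
    intro p
    by_cases hex : ∃ i j : Fin 12, i ≠ j ∧ onLine (LAc a i) p ∧ onLine (LAc a j) p
    · obtain ⟨i, j, hij, hi, hj⟩ := hex
      rw [locate ha p i j hij hi hj, lineSet ha (i, j) hij, Set.ncard_coe_finset]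
      exact D2 i j hij
    · have hsub : {i : Fin 12 | onLine (LAc a i) p}.Subsingleton := by
        intro x hx y hy
        by_contra hxy
        exact hex ⟨x, y, hxy, hx, hy⟩
      rcases hsub.eq_empty_or_singleton with h | ⟨x, h⟩ <;> rw [h] <;> simp
  · -- 12 triple points
    rw [mult_set ha R3 3 (by norm_num) D3 D5, mult_count ha R3 (fun q hq => (D3 q hq).1) D4,
      Dcard3]
  · -- 30 double points
    rw [mult_set ha R2 2 (by norm_num) D3' D5', mult_count ha R2 (fun q hq => (D3' q hq).1) D4',
      Dcard2]
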